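/- Let $k=\mathbb{F}_{2^m}$ with $m$ odd and $e\in k^*$, $e=\lambda^3$ with $\lambda\in k$ (which is unique since cubing is bijective). If $\lambda\notin\mathrm{AS}(k)$ then $x^4+x^3+x^2+x+e$ is irreducible over $k$; if $\lambda\in\mathrm{AS}(k)$ then it factors as (linear)(linear)(irreducible quadratic). -/

import Mathlib

open Polynomial
set_option linter.unusedSectionVars false

section Aux
variable {k : Type*} [Field k] [Fintype k] [CharP k 2] {m : ℕ}

lemma two_pow_mod_three (hm : Odd m) : 2 ^ m % 3 = 2 := by
  obtain ⟨n, rfl⟩ := hm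
  have h4 : 4 ^ n % 3 = 1 := by
    rw [Nat.pow_mod]; simp
  have h2 : 2 ^ (2 * n + 1) = 2 * 4 ^ n := by
    rw [pow_succ, pow_mul]; ring
  rw [h2]
  omega

lemma cube_eq_one (hm : Odd m) (hq : Fintype.card k = 2 ^ m) (c : k)
    (hc : c ^ 3 = 1) : c = 1 := by
  have hc0 : c ≠ 0 := by
    intro h; rw [h] at hc; simp at hc
  have h1 : orderOf c ∣ 3 := orderOf_dvd_of_pow_eq_one hc
  have h2 : orderOf c ∣ 2 ^ m - 1 := by
    apply orderOf_dvd_of_pow_eq_one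
    rw [← hq]
    exact FiniteField.pow_card_sub_one_eq_one c hc0
  have h3 : 2 ^ m % 3 = 2 := two_pow_mod_three hm
  have h5 : (1:ℕ) ≤ 2 ^ m := Nat.one_le_two_pow
  have h4 : ¬ (3 ∣ 2 ^ m - 1) := by omega
  have : orderOf c = 1 ∨ orderOf c = 3 := (Nat.Prime.eq_one_or_self_of_dvd (by norm_num) _ h1).imp id id
  rcases this with h | h
  · exact orderOf_eq_one_iff.mp h
  · exact absurd (h ▸ h2) h4

lemma cube_inj (hm : Odd m) (hq : Fintype.card k = 2 ^ m) {a b : k}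
    (h : a ^ 3 = b ^ 3) : a = b := by
  rcases eq_or_ne b 0 with rfl | hb
  · simpa [pow_eq_zero_iff] using h
  · have : (a / b) ^ 3 = 1 := by
      rw [div_pow, h, div_self (pow_ne_zero _ hb)]
    have := cube_eq_one hm hq _ this
    field_simp at this
    exact this


lemma no_one_AS (hm : Odd m) (hq : Fintype.card k = 2 ^ m) (t : k) :
    t + t ^ 2 ≠ 1 := by
  intro h
  have htwo : (2:k) = 0 := by
    have := CharP.cast_eq_zero k 2; exact_mod_cast this
  have h3 : t ^ 3 = 1 := by linear_combination (t - 1) * h + (t - 1) * htwo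
  have := cube_eq_one hm hq t h3
  rw [this] at h
  have : (2:k) = 1 := by linear_combination h
  rw [htwo] at this
  exact zero_ne_one this

lemma sq_inj {a b : k} (h : a ^ 2 = b ^ 2) : a = b := by
  have htwo : (2:k) = 0 := by
    have := CharP.cast_eq_zero k 2; exact_mod_cast this
  have h0 : (a - b) ^ 2 = 0 := by linear_combination h - (a*b - b^2) * htwo
  have := pow_eq_zero_iff (n := 2) (by norm_num) |>.mp h0
  exact sub_eq_zero.mp this

lemma sq_surj (a : k) : ∃ r : k, r ^ 2 = a := by
  have hinj : Function.Injective (fun x : k => x ^ 2) := by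
    intro x y hxy
    have htwo : (2:k) = 0 := by
      have := CharP.cast_eq_zero k 2; exact_mod_cast this
    have : (x - y) ^ 2 = 0 := by
      simp only at hxy
      linear_combination hxy - (x*y - y^2) * htwo
    have := pow_eq_zero_iff (n := 2) (by norm_num) |>.mp this
    exact sub_eq_zero.mp this
  have hsurj := Finite.surjective_of_injective hinj
  exact hsurj a


lemma AS_dichotomy (hm : Odd m) (hq : Fintype.card k = 2 ^ m) (a : k) :
    (∃ t : k, a = t + t ^ 2) ∨ (∃ t : k, a + 1 = t + t ^ 2) := by
  classical
  have htwo : (2:k) = 0 := by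
    have := CharP.cast_eq_zero k 2; exact_mod_cast this
  let φ : k →+ k :=
    { toFun := fun x => x ^ 2 + x
      map_zero' := by ring_nf
      map_add' := by
        intro x y
        linear_combination (x * y) * htwo }
  have hφ : ∀ x : k, φ x = x ^ 2 + x := fun _ => rfl
  set H : AddSubgroup k := φ.range with hH
  have hset : ((AddMonoidHom.ker φ : AddSubgroup k) : Set k) = {0, 1} := by
    ext x
    simp only [SetLike.mem_coe, AddMonoidHom.mem_ker, hφ, Set.mem_insert_iff,
      Set.mem_singleton_iff]
    constructor
    · intro hx
      have hx2 : x * (x + 1) = 0 := by linear_combination hx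
      rcases mul_eq_zero.mp hx2 with h | h
      · exact Or.inl h
      · exact Or.inr (by linear_combination h - htwo)
    · rintro (rfl | rfl)
      · ring
      · linear_combination htwo
  have hker2 : Nat.card (AddMonoidHom.ker φ) = 2 := by
    have h1 : Nat.card (AddMonoidHom.ker φ) = ((AddMonoidHom.ker φ : AddSubgroup k) : Set k).ncard := by
      rw [← SetLike.coe_sort_coe, Nat.card_coe_set_eq]
    rw [h1, hset, Set.ncard_pair (zero_ne_one' k)]
  have e1 : Nat.card (k ⧸ AddMonoidHom.ker φ) = Nat.card H :=
    Nat.card_congr (QuotientAddGroup.quotientKerEquivRange φ).toEquiv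
  have e2 : Nat.card k = Nat.card (k ⧸ AddMonoidHom.ker φ) * Nat.card (AddMonoidHom.ker φ) :=
    AddSubgroup.card_eq_card_quotient_mul_card_addSubgroup _
  have e3 : Nat.card k = Nat.card (k ⧸ H) * Nat.card H :=
    AddSubgroup.card_eq_card_quotient_mul_card_addSubgroup _
  have hHpos : 0 < Nat.card H := Nat.card_pos
  have hQ2 : Nat.card (k ⧸ H) = 2 := by
    rw [hker2] at e2
    rw [e1] at e2
    rw [e2] at e3
    have h23 : 2 * Nat.card ↥H = Nat.card (k ⧸ H) * Nat.card ↥H := by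
      rw [← e3]; ring
    exact (Nat.eq_of_mul_eq_mul_right hHpos h23).symm
  rcases (Nat.card_eq_two_iff' ((0 : k ⧸ H))).mp hQ2 with ⟨y, hy, hyuniq⟩
  by_cases ha : ((a : k) : k ⧸ H) = 0
  · left
    rcases (QuotientAddGroup.eq_zero_iff a).mp ha with ⟨t, ht⟩
    rw [hφ] at ht
    exact ⟨t, by linear_combination -ht⟩
  · right
    have h1 : (((1:k)) : k ⧸ H) ≠ 0 := by
      intro h1eq
      rcases (QuotientAddGroup.eq_zero_iff (1:k)).mp h1eq with ⟨t, ht⟩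
      rw [hφ] at ht
      exact no_one_AS hm hq t (by linear_combination ht)
    have hay : (a : k ⧸ H) = ((1:k) : k ⧸ H) := (hyuniq _ ha).trans (hyuniq _ h1).symm
    have hsub : a - 1 ∈ H := by
      have : ((a - 1 : k) : k ⧸ H) = 0 := by
        rw [QuotientAddGroup.mk_sub]
        rw [hay]
        simp
      exact (QuotientAddGroup.eq_zero_iff _).mp this
    rcases hsub with ⟨t, ht⟩
    rw [hφ] at ht
    exact ⟨t, by linear_combination -ht + htwo⟩


lemma root_imp_AS (hm : Odd m) (hq : Fintype.card k = 2 ^ m) (e lam : k)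
    (he : e ≠ 0) (hlam : lam ^ 3 = e) (y : k)
    (hy : y ^ 4 + y ^ 3 + y ^ 2 + y + e = 0) : ∃ t : k, lam = t + t ^ 2 := by
  have htwo : (2:k) = 0 := by
    have := CharP.cast_eq_zero k 2; exact_mod_cast this
  have hy1 : y + 1 ≠ 0 := by
    intro h
    have hyy : y = 1 := by linear_combination h - htwo
    rw [hyy] at hy
    exact he (by linear_combination hy - 2 * htwo)
  set v := lam * y / (y + 1) with hv
  have hvy : v * (y + 1) = lam * y := by
    rw [hv]; field_simp
  have haux : (v^4 + v) * (y+1)^4 = lam^4 * (y+1)^4 := by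
    linear_combination ((1) + (3)*y + (3)*y^2 + y^3 + y^3*lam^3 + v*y^2*lam^2 + v*y^3*lam^2 + v^2*y*lam + (2)*v^2*y^2*lam + v^2*y^3*lam + v^3 + (3)*v^3*y + (3)*v^3*y^2 + v^3*y^3) * hvy + lam * hy + ((-1)*lam + (-4)*y*lam + (-6)*y^2*lam + (-4)*y^3*lam) * hlam + ((-1)*lam*e + (-2)*y*lam*e + y^2*lam + (-3)*y^2*lam*e + y^3*lam + (-2)*y^3*lam*e) * htwo
  have hv4 : v^4 + v = lam^4 := mul_right_cancel₀ (pow_ne_zero 4 hy1) haux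
  have h4 : lam^4 = (v^2+v) + (v^2+v)^2 := by
    linear_combination -hv4 + (-v^3 - v^2) * htwo
  obtain ⟨r, hr⟩ := sq_surj (k := k) (v^2 + v)
  have h2 : lam^2 = r + r^2 := by
    apply sq_inj
    linear_combination h4 + ((-1) + (-2)*r + (-1)*r^2 + (-1)*v + (-1)*v^2) * hr + ((-1)*v*r + (-1)*v^2*r) * htwo
  obtain ⟨r', hr'⟩ := sq_surj (k := k) r
  refine ⟨r', sq_inj ?_⟩
  linear_combination h2 + ((-1) + (-2)*r' + (-1)*r'^2 + (-1)*r) * hr' + ((-1)*r*r') * htwo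




lemma monic_deg1_eq {p : k[X]} (hmo : p.Monic) (hd : p.natDegree = 1) :
    p = X + C (p.coeff 0) := by
  have h1 : p.coeff 1 = 1 := by
    have := hmo.coeff_natDegree; rwa [hd] at this
  have := eq_X_add_C_of_degree_le_one (p := p)
    (by rw [degree_eq_natDegree hmo.ne_zero, hd]; norm_num)
  rw [h1, C_1, one_mul] at this
  exact this

lemma monic_deg2_eq {p : k[X]} (hmo : p.Monic) (hd : p.natDegree = 2) :
    p = X ^ 2 + C (p.coeff 1) * X + C (p.coeff 0) := by
  ext n
  rcases n with _ | _ | _ | n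
  · simp
  · simp [coeff_X_pow]
  · have h2 : p.coeff 2 = 1 := by
      have := hmo.coeff_natDegree; rwa [hd] at this
    simp [coeff_X_pow, h2]
    try omega
  · have hlt : p.natDegree < n + 3 := by omega
    simp [coeff_eq_zero_of_natDegree_lt hlt, coeff_X_pow, coeff_C]

lemma quad_coeffs {a b c d e : k}
    (h : (X^4+X^3+X^2+X+C e : k[X]) = (X^2 + C a * X + C b) * (X^2 + C c * X + C d)) :
    a + c = 1 ∧ b + d + a*c = 1 ∧ a*d + b*c = 1 ∧ b*d = e := by
  have hexp : (X^2 + C a * X + C b) * (X^2 + C c * X + C d)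
      = X^4 + C (a+c) * X^3 + C (b + d + a*c) * X^2 + C (a*d + b*c) * X + C (b*d) := by
    simp only [C_add, C_mul]
    ring
  rw [hexp] at h
  have h3 := congrArg (fun p : k[X] => coeff p 3) h
  have h2 := congrArg (fun p : k[X] => coeff p 2) h
  have h1 := congrArg (fun p : k[X] => coeff p 1) h
  have h0 := congrArg (fun p : k[X] => coeff p 0) h
  simp only [coeff_add, coeff_C_mul, coeff_X_pow, coeff_C, coeff_X, coeff_one] at h3 h2 h1 h0
  norm_num at h3 h2 h1 h0
  exact ⟨h3.symm, h2.symm, h1.symm, h0.symm⟩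


end Aux
theorem stmt_14 (k : Type*) [Field k] [Fintype k] [CharP k 2]
    (m : ℕ) (hm : Odd m) (hq : Fintype.card k = 2 ^ m)
    (e lam : k) (he : e ≠ 0) (hlam : lam ^ 3 = e) :
    ((¬ ∃ t : k, lam = t + t ^ 2) →
      Irreducible (X ^ 4 + X ^ 3 + X ^ 2 + X + C e : k[X])) ∧
    ((∃ t : k, lam = t + t ^ 2) →
      ∃ z₁ z₂ : k, ∃ g : k[X], z₁ ≠ z₂ ∧ g.Monic ∧ g.degree = 2 ∧
        Irreducible g ∧
        (X ^ 4 + X ^ 3 + X ^ 2 + X + C e : k[X])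
          = (X + C z₁) * (X + C z₂) * g) := by
  have htwo : (2:k) = 0 := by
    have h := CharP.cast_eq_zero k 2; exact_mod_cast h
  have hlam0 : lam ≠ 0 := by
    intro h; apply he; rw [← hlam, h]; ring
  set f : k[X] := X ^ 4 + X ^ 3 + X ^ 2 + X + C e with hfdef
  have hfm : f.Monic := by
    have h : f = X ^ 4 + (X ^ 3 + X ^ 2 + X + C e) := by rw [hfdef]; ring
    rw [h]
    apply monic_X_pow_add
    refine lt_of_le_of_lt ?_ (show (3 : WithBot ℕ) < 4 by norm_num)
    compute_degree
  have hfd4 : f.natDegree = 4 := by rw [hfdef]; compute_degree!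
  have hfne1 : f ≠ 1 := by
    intro h; rw [h] at hfd4; simp at hfd4
  have hevalf : ∀ y : k, eval y f = y^4 + y^3 + y^2 + y + e := by
    intro y; rw [hfdef]; simp
  constructor
  · -- irreducible case
    intro hAS
    rw [hfm.irreducible_iff_lt_natDegree_lt hfne1]
    intro p hpm hpmem hpdvd
    rw [hfd4] at hpmem
    have hmem := Finset.mem_Ioc.mp hpmem
    have hpd : p.natDegree = 1 ∨ p.natDegree = 2 := by omega
    rcases hpd with hpd | hpd
    · -- linear factor: root
      have hpeq : p = X - C (-(p.coeff 0)) := by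
        rw [map_neg, sub_neg_eq_add]; exact monic_deg1_eq hpm hpd
      rw [hpeq] at hpdvd
      have hroot := dvd_iff_isRoot.mp hpdvd
      rw [IsRoot, hevalf] at hroot
      exact hAS (root_imp_AS hm hq e lam he hlam _ hroot)
    · -- quadratic factor
      obtain ⟨p2, hp2⟩ := hpdvd
      have hp2m : p2.Monic := hpm.of_mul_monic_left (hp2 ▸ hfm)
      have hp2d : p2.natDegree = 2 := by
        have hnd : p.natDegree + p2.natDegree = 4 := by
          rw [← natDegree_mul hpm.ne_zero hp2m.ne_zero, ← hp2, hfd4]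
        omega
      rw [monic_deg2_eq hpm hpd, monic_deg2_eq hp2m hp2d, hfdef] at hp2
      obtain ⟨h3, h2, h1, h0⟩ := quad_coeffs hp2
      set a := p.coeff 1
      set b := p.coeff 0
      set c := p2.coeff 1
      set d := p2.coeff 0
      have hb : b = 1 + a + a^2 + a^3 := by
        linear_combination (1) * h1 + (b + a^2) * h3 + (a) * h2 + (b + (-1)*b*c + (-1)*a*d + (-1)*a*b + (-1)*a^2*c + (-1)*a^3) * htwo
      have hdd : d = a^3 := by
        linear_combination h2 + hb + (a) * h3 + ((1) + (-1)*b + a + (-1)*a*c) * htwo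
      have hcube : (a + a^2)^3 = lam^3 := by
        have h0r : e = b * d := h0.symm
        linear_combination hlam + h0r + (d) * hb + ((1) + a + a^2 + a^3) * hdd + ((-1)*lam^3 + a^3 + (2)*a^4 + (2)*a^5 + a^6) * htwo
      have := cube_inj hm hq hcube
      exact hAS ⟨a, this.symm⟩
  · -- split case
    rintro ⟨t, ht⟩
    obtain ⟨v, hv4⟩ : ∃ v : k, v^4 + v = lam^4 := by
      rcases AS_dichotomy hm hq (t^4) with ⟨s, hs⟩ | ⟨s, hs⟩
      · refine ⟨s, ?_⟩
        linear_combination (lam^3 + t*lam^2 + t^2*lam + t^2*lam^2 + t^3 + s + s*lam + s*t + s*t^2 + s^2 + s^2*lam + s^2*t + s^2*t^2) * ht + ((1) + lam + lam^2 + t + s + s^2) * hs + ((-1)*lam^4 + t^3*lam^2 + s + s*t + s*t^2 + s*t^3 + s^2 + s^2*t + s^2*t^2 + s^2*t^3 + s^3 + s^4) * htwo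
      · refine ⟨s, ?_⟩
        linear_combination ((1) + lam + lam^3 + t + t*lam^2 + t^2 + t^2*lam + t^2*lam^2 + t^3 + s + s*lam + s*t + s*t^2 + s^2 + s^2*lam + s^2*t + s^2*t^2) * ht + ((2) + lam + lam^2 + t + s + s^2) * hs + ((-1) + (-1)*lam + (-1)*lam^2 + (-1)*lam^4 + t^2 + t^3 + t^3*lam^2 + s + s*t + s*t^2 + s*t^3 + s^2 + s^2*t + s^2*t^2 + s^2*t^3 + s^3 + s^4) * htwo
    have hvlam : v + lam ≠ 0 := by
      intro h0
      apply hlam0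
      have hveq : v = lam := by linear_combination h0 - lam * htwo
      rw [hveq] at hv4
      linear_combination hv4
    have hv4' : (v+1)^4 + (v+1) = lam^4 := by
      linear_combination hv4 + ((1) + (2)*v + (3)*v^2 + (2)*v^3) * htwo
    have hv1lam : (v+1) + lam ≠ 0 := by
      intro h0
      apply hlam0
      have hveq : v + 1 = lam := by linear_combination h0 - lam * htwo
      rw [hveq] at hv4'
      linear_combination hv4'
    have key : ∀ u : k, u^4 + u = lam^4 → u + lam ≠ 0 →
        (u/(u+lam))^4 + (u/(u+lam))^3 + (u/(u+lam))^2 + (u/(u+lam)) + e = 0 := by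
      intro u hu4 hulam
      have hz1v : (u/(u+lam)) * (u + lam) = u := div_mul_cancel₀ _ hulam
      set z := u/(u+lam) with hzdef
      have hlamr : e = lam^3 := hlam.symm
      have hT : (z^4+z^3+z^2+z+e)*(u+lam)^4 = 0 := by
        linear_combination (lam^3 + (2)*u^2*lam + z*lam^3 + (2)*z*u*lam^2 + (2)*z*u^2*lam + z*u^3 + z^2*lam^3 + z^2*u^2*lam + z^3*lam^3 + z^3*u*lam^2 + z^3*u^2*lam + z^3*u^3) * hz1v + (e) * hu4 + (u) * hlamr + (lam^4*e + (-1)*u*e + u*lam^3 + (2)*u*lam^3*e + (3)*u^2*lam^2*e + u^3*lam + (2)*u^3*lam*e + (2)*z*u*lam^3 + (3)*z*u^2*lam^2 + (2)*z*u^3*lam + z*u^4 + z^2*u*lam^3 + z^2*u^2*lam^2 + z^2*u^3*lam + (2)*z^3*u*lam^3 + (3)*z^3*u^2*lam^2 + (2)*z^3*u^3*lam + z^3*u^4 + z^4*u*lam^3 + (2)*z^4*u^2*lam^2 + z^4*u^3*lam) * htwo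
      rcases mul_eq_zero.mp hT with h | h
      · exact h
      · exact absurd (pow_eq_zero_iff (by norm_num) |>.mp h) hulam
    set z₁ := v/(v+lam) with hz1def
    set z₂ := (v+1)/((v+1)+lam) with hz2def
    have hz1 : z₁^4 + z₁^3 + z₁^2 + z₁ + e = 0 := key v hv4 hvlam
    have hz2 : z₂^4 + z₂^3 + z₂^2 + z₂ + e = 0 := key (v+1) hv4' hv1lam
    have hne : z₁ ≠ z₂ := by
      intro h0
      rw [hz1def, hz2def, div_eq_div_iff hvlam hv1lam] at h0
      exact hlam0 (by linear_combination -h0)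
    -- every root is z₁ or z₂
    have honly : ∀ y : k, y^4 + y^3 + y^2 + y + e = 0 → y = z₁ ∨ y = z₂ := by
      intro y hy
      have hy1 : y + 1 ≠ 0 := by
        intro h
        have hyy : y = 1 := by linear_combination h - htwo
        rw [hyy] at hy
        exact he (by linear_combination hy - 2 * htwo)
      set w := lam * y / (y + 1) with hwdef
      have hwy : w * (y + 1) = lam * y := by
        rw [hwdef]; field_simp
      have haux : (w^4 + w) * (y+1)^4 = lam^4 * (y+1)^4 := by
        linear_combination ((1) + (3)*y + (3)*y^2 + y^3 + y^3*lam^3 + w*y^2*lam^2 + w*y^3*lam^2 + w^2*y*lam + (2)*w^2*y^2*lam + w^2*y^3*lam + w^3 + (3)*w^3*y + (3)*w^3*y^2 + w^3*y^3) * hwy + lam * hy + ((-1)*lam + (-4)*y*lam + (-6)*y^2*lam + (-4)*y^3*lam) * hlam + ((-1)*lam*e + (-2)*y*lam*e + y^2*lam + (-3)*y^2*lam*e + y^3*lam + (-2)*y^3*lam*e) * htwo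
      have hw4 : w^4 + w = lam^4 := mul_right_cancel₀ (pow_ne_zero 4 hy1) haux
      have hu4 : (v+w)^4 = (v+w) := by
        linear_combination hv4 + hw4 + (lam^4 + (-1)*w + (-1)*v + (2)*v*w^3 + (3)*v^2*w^2 + (2)*v^3*w) * htwo
      have hs2 : ((v+w)^2+(v+w))^2 = (v+w)^2+(v+w) := by
        linear_combination hu4 + (v+w)^3 * htwo
      have hfactor : ((v+w)^2+(v+w)) * (((v+w)^2+(v+w)) - 1) = 0 := by
        linear_combination hs2
      rcases mul_eq_zero.mp hfactor with h | h
      · have hfac2 : (v+w) * ((v+w)+1) = 0 := by linear_combination h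
        rcases mul_eq_zero.mp hfac2 with h2 | h2
        · left
          have hwv : w = v := by linear_combination h2 - v * htwo
          rw [hwv] at hwy
          rw [hz1def, eq_div_iff hvlam]
          linear_combination hwy + (lam*y - v) * htwo
        · right
          have hwv : w = v + 1 := by linear_combination h2 - (v+1) * htwo
          rw [hwv] at hwy
          rw [hz2def, eq_div_iff hv1lam]
          linear_combination hwy + (lam*y - v - 1) * htwo
      · exfalso
        have h1 : (v+w) + (v+w)^2 = 1 := by linear_combination h
        exact no_one_AS hm hq (v+w) h1
    -- factor f
    have hrz1 : f.IsRoot z₁ := by rw [IsRoot, hevalf]; exact hz1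
    have hq1 : (X - C z₁) * (f /ₘ (X - C z₁)) = f := (mul_divByMonic_eq_iff_isRoot).mpr hrz1
    set q1 := f /ₘ (X - C z₁) with hq1def
    have hq1m : q1.Monic := (monic_X_sub_C z₁).of_mul_monic_left (by rw [hq1]; exact hfm)
    have hrz2q : q1.IsRoot z₂ := by
      have hev := congrArg (eval z₂) hq1
      simp only [eval_mul, eval_sub, eval_X, eval_C] at hev
      rw [hevalf, hz2] at hev
      rcases mul_eq_zero.mp hev with h | h
      · exact absurd (by linear_combination h : z₂ = z₁) hne.symm
      · exact h
    have hg1 : (X - C z₂) * (q1 /ₘ (X - C z₂)) = q1 := (mul_divByMonic_eq_iff_isRoot).mpr hrz2q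
    set g := q1 /ₘ (X - C z₂) with hgdef
    have hgm : g.Monic := (monic_X_sub_C z₂).of_mul_monic_left (by rw [hg1]; exact hq1m)
    have hfac : f = (X - C z₁) * ((X - C z₂) * g) := by rw [hg1, hq1]
    have hgd : g.natDegree = 2 := by
      have hnd : (X - C z₁).natDegree + ((X - C z₂) * g).natDegree = 4 := by
        rw [← natDegree_mul (X_sub_C_ne_zero z₁) (mul_ne_zero (X_sub_C_ne_zero z₂) hgm.ne_zero),
          ← hfac, hfd4]
      rw [natDegree_mul (X_sub_C_ne_zero z₂) hgm.ne_zero, natDegree_X_sub_C] at hnd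
      rw [natDegree_X_sub_C] at hnd
      omega
    have hgdeg : g.degree = 2 := by
      rw [degree_eq_natDegree hgm.ne_zero, hgd]; rfl
    -- derivative
    have hevald : ∀ y : k, eval y (derivative f) = y^2 + 1 := by
      intro y
      rw [hfdef]
      simp only [derivative_add, derivative_X_pow, derivative_C, derivative_X]
      simp only [eval_add, eval_mul, eval_pow, eval_C, eval_X, eval_one, eval_zero,
        eval_natCast]
      push_cast
      linear_combination (2*y^3 + y^2 + y) * htwo
    have hder_key : ∀ zA zB : k, f = (X - C zA) * ((X - C zB) * g) → zA + 1 ≠ 0 →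
        eval zA g ≠ 0 := by
      intro zA zB hfacAB hzA1 h0
      have hd := congrArg (fun p : k[X] => eval zA (derivative p)) hfacAB
      simp only [derivative_mul, derivative_sub, derivative_X, derivative_C, sub_zero,
        eval_add, eval_mul, eval_sub, eval_X, eval_C, sub_self, one_mul, zero_mul,
        mul_zero, add_zero, zero_add, eval_one] at hd
      rw [hevald zA, h0] at hd
      have hsq : (zA + 1)^2 = 0 := by linear_combination hd + zA * htwo
      exact hzA1 (pow_eq_zero_iff (by norm_num) |>.mp hsq)
    have hz11 : z₁ + 1 ≠ 0 := by
      intro h0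
      apply hlam0
      have h1 : z₁ = 1 := by linear_combination h0 - htwo
      rw [hz1def, div_eq_one_iff_eq hvlam] at h1
      linear_combination -h1
    have hz21 : z₂ + 1 ≠ 0 := by
      intro h0
      apply hlam0
      have h1 : z₂ = 1 := by linear_combination h0 - htwo
      rw [hz2def, div_eq_one_iff_eq hv1lam] at h1
      linear_combination -h1
    have hgz1 : eval z₁ g ≠ 0 := hder_key z₁ z₂ hfac hz11
    have hgz2 : eval z₂ g ≠ 0 := by
      apply hder_key z₂ z₁ _ hz21
      rw [hfac]; ring
    have hgirr : Irreducible g := by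
      by_contra hni
      rw [hgm.not_irreducible_iff_exists_add_mul_eq_coeff hgd] at hni
      obtain ⟨c₁, c₂, hc0, hc1⟩ := hni
      have hgeq := monic_deg2_eq hgm hgd
      have hroot : eval c₁ g = 0 := by
        conv_lhs => rw [hgeq]
        simp only [eval_add, eval_mul, eval_pow, eval_C, eval_X]
        rw [hc0, hc1]
        linear_combination (c₁^2 + c₁*c₂) * htwo
      have hfc : c₁^4 + c₁^3 + c₁^2 + c₁ + e = 0 := by
        have hev := congrArg (eval c₁) hfac
        rw [hevalf] at hev
        simp only [eval_mul, eval_sub, eval_X, eval_C, hroot, mul_zero] at hev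
        exact hev
      rcases honly c₁ hfc with rfl | rfl
      · exact hgz1 hroot
      · exact hgz2 hroot
    refine ⟨z₁, z₂, g, hne, hgm, hgdeg, hgirr, ?_⟩
    have hXC : ∀ z : k, X - C z = X + C z := by
      intro z; rw [sub_eq_add_neg, ← C_neg, CharTwo.neg_eq]
    calc f = (X - C z₁) * ((X - C z₂) * g) := hfac
      _ = (X + C z₁) * (X + C z₂) * g := by rw [hXC, hXC]; ring
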